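/- For all n ≥ 0 and all 0 ≤ i ≤ n, p_n(α_{n+2}) · p_i(α_{n+2}) = α_{n+2}^{i+1} · p_{n−i}(α_{n+2}), where α_{n+2} = 4cos²(π/(n+4)). -/
import Mathlib


open Real Finset

noncomputable def p : ℕ → ℝ → ℝ
  | 0, x => x
  | 1, x => x * (x - 1)
  | (n+2), x => x * (p (n+1) x - p n x)

lemma p_key (θ : ℝ) : ∀ k : ℕ,
    p k (4 * Real.cos θ ^ 2) * Real.sin θ
      = (2 * Real.cos θ) ^ (k + 1) * Real.sin (((k : ℝ) + 2) * θ) := by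
  intro k
  induction k using Nat.twoStepInduction with
  | zero =>
    have h : ((0 : ℕ) + 2 : ℝ) * θ = 2 * θ := by norm_num
    rw [h, Real.sin_two_mul, p]
    ring
  | one =>
    have h : ((1 : ℕ) + 2 : ℝ) * θ = 3 * θ := by norm_num
    rw [h, Real.sin_three_mul, p]
    have hsc := Real.sin_sq_add_cos_sq θ
    linear_combination 16 * Real.cos θ ^ 2 * Real.sin θ * hsc
  | more k ih2 ih1 =>
    have hx : p (k + 2) (4 * Real.cos θ ^ 2)
        = (4 * Real.cos θ ^ 2) * (p (k + 1) (4 * Real.cos θ ^ 2)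
            - p k (4 * Real.cos θ ^ 2)) := rfl
    -- rewrite sines of shifted angles
    have h4 : (((k + 2 : ℕ) : ℝ) + 2) * θ = (((k : ℝ) + 3) * θ) + θ := by
      push_cast; ring
    have h3 : (((k + 1 : ℕ) : ℝ) + 2) * θ = ((k : ℝ) + 3) * θ := by
      push_cast; ring
    have h2 : ((k : ℝ) + 2) * θ = (((k : ℝ) + 3) * θ) - θ := by ring
    have expand : (4 * Real.cos θ ^ 2) * (p (k + 1) (4 * Real.cos θ ^ 2)
          - p k (4 * Real.cos θ ^ 2)) * Real.sin θ
        = 4 * Real.cos θ ^ 2 * (p (k + 1) (4 * Real.cos θ ^ 2) * Real.sin θ)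
          - 4 * Real.cos θ ^ 2 * (p k (4 * Real.cos θ ^ 2) * Real.sin θ) := by ring
    rw [hx, expand, ih1, ih2, h4, h3, h2, Real.sin_add, Real.sin_sub]
    ring

theorem stmt_15 (n i : ℕ) (hi : i ≤ n) :
    p n (4 * Real.cos (Real.pi / ((n : ℝ) + 4)) ^ 2) *
      p i (4 * Real.cos (Real.pi / ((n : ℝ) + 4)) ^ 2) =
    (4 * Real.cos (Real.pi / ((n : ℝ) + 4)) ^ 2) ^ (i + 1) *
      p (n - i) (4 * Real.cos (Real.pi / ((n : ℝ) + 4)) ^ 2) := by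
  set θ : ℝ := Real.pi / ((n : ℝ) + 4) with hθ
  have hne : (n : ℝ) + 4 ≠ 0 := by positivity
  have hθpos : 0 < θ := by
    apply div_pos Real.pi_pos
    positivity
  have hθlt : θ < Real.pi := by
    rw [hθ, div_lt_iff₀ (by positivity)]
    nlinarith [Real.pi_pos, Nat.cast_nonneg (α := ℝ) n]
  have hs : Real.sin θ ≠ 0 := ne_of_gt (Real.sin_pos_of_pos_of_lt_pi hθpos hθlt)
  have hn2 : ((n : ℝ) + 2) * θ = Real.pi - 2 * θ := by
    rw [hθ]; field_simp; ring
  have hni : (((n - i : ℕ) : ℝ) + 2) * θ = Real.pi - ((i : ℝ) + 2) * θ := by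
    rw [Nat.cast_sub hi, hθ]; field_simp; ring
  have k1 := p_key θ n
  have k2 := p_key θ i
  have k3 := p_key θ (n - i)
  apply mul_right_cancel₀ hs
  apply mul_right_cancel₀ hs
  have lhs : p n (4 * Real.cos θ ^ 2) * p i (4 * Real.cos θ ^ 2) * Real.sin θ * Real.sin θ
      = (p n (4 * Real.cos θ ^ 2) * Real.sin θ) * (p i (4 * Real.cos θ ^ 2) * Real.sin θ) := by
    ring
  rw [lhs, k1, k2]
  have rhs : (4 * Real.cos θ ^ 2) ^ (i + 1) * p (n - i) (4 * Real.cos θ ^ 2)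
        * Real.sin θ * Real.sin θ
      = (4 * Real.cos θ ^ 2) ^ (i + 1) * (p (n - i) (4 * Real.cos θ ^ 2) * Real.sin θ)
        * Real.sin θ := by ring
  rw [rhs, k3, hn2, hni, Real.sin_pi_sub, Real.sin_pi_sub, Real.sin_two_mul]
  have hc : (4 * Real.cos θ ^ 2) ^ (i + 1) = (2 * Real.cos θ) ^ (2 * (i + 1)) := by
    rw [pow_mul]; ring_nf
  rw [hc]
  have hexp : (2 * Real.cos θ) ^ (n + 1) * (2 * Real.cos θ)
      * (2 * Real.cos θ) ^ (i + 1)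
      = (2 * Real.cos θ) ^ (2 * (i + 1)) * (2 * Real.cos θ) ^ (n - i + 1) := by
    rw [← pow_succ, ← pow_add, ← pow_add]
    congr 1
    omega
  calc (2 * Real.cos θ) ^ (n + 1) * (2 * Real.sin θ * Real.cos θ)
        * ((2 * Real.cos θ) ^ (i + 1) * Real.sin (((i : ℝ) + 2) * θ))
      = ((2 * Real.cos θ) ^ (n + 1) * (2 * Real.cos θ) * (2 * Real.cos θ) ^ (i + 1))
          * Real.sin (((i : ℝ) + 2) * θ) * Real.sin θ := by ring
    _ = (2 * Real.cos θ) ^ (2 * (i + 1)) * ((2 * Real.cos θ) ^ (n - i + 1)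
          * Real.sin (((i : ℝ) + 2) * θ)) * Real.sin θ := by rw [hexp]; ring
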